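/- Let h, k ∈ ℝⁿ, let p ≥ 1, let x₀ < x₁ < … < x_{p−1} be nonnegative reals with 2p ≤ n+1 and with x₀ = 0 in case 2p = n+1, and let μ₀, …, μ_{p−1} be positive reals. Set Z = Σ_{i=0}^{p−1} μᵢ·Z(xᵢ), ξ = S·Z·g + Z·h, and ξᵢ = S·Z(xᵢ)·g + Z(xᵢ)·h for each i. Then ⟨ξ, Z⁺·ξ⟩ = Σ_{i=0}^{p−1} μᵢ·⟨ξᵢ, Z(xᵢ)⁺·ξᵢ⟩ and ⟨h−k, ξ⟩ = Σ_{i=0}^{p−1} μᵢ·⟨h−k, ξᵢ⟩; in particular, if ⟨h−k, ξ⟩ ≠ 0 then ⟨ξ, Z⁺·ξ⟩ / ⟨h−k, ξ⟩ = (Σ_{i=0}^{p−1} μᵢ·⟨ξᵢ, Z(xᵢ)⁺·ξᵢ⟩) / (Σ_{i=0}^{p−1} μᵢ·⟨h−k, ξᵢ⟩). -/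

import Mathlib

open Matrix

/-- The `n × n` shift matrix `S` with `S_{i,i+1} = 1` and all other entries `0`. -/
def Smat (n : ℕ) : Matrix (Fin n) (Fin n) ℝ :=
  Matrix.of fun i j => if (i : ℕ) + 1 = (j : ℕ) then 1 else 0

/-- The last standard basis vector `g` of `ℝⁿ`. -/
def gvec (n : ℕ) : Fin n → ℝ := fun i => if (i : ℕ) = n - 1 then 1 else 0

/-- The signed Hankel rank-two matrix `Z(x)`: in 0-based indexing, the `(i,j)` entry is `0`
if `i+j` is odd and `(−1)^{(i−j)/2} x^{(i+j)/2}` if `i+j` is even. -/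
noncomputable def Zxmat (n : ℕ) (x : ℝ) : Matrix (Fin n) (Fin n) ℝ :=
  Matrix.of fun i j =>
    if ((i : ℕ) + (j : ℕ)) % 2 = 1 then 0
    else (-1 : ℝ) ^ (((i : ℤ) - (j : ℤ)) / 2) * x ^ (((i : ℕ) + (j : ℕ)) / 2)

/-- `P` is the Moore–Penrose pseudoinverse of `M` (the four Penrose conditions). -/
def IsMoorePenroseInv {n : ℕ} (M P : Matrix (Fin n) (Fin n) ℝ) : Prop :=
  M * P * M = M ∧ P * M * P = P ∧ (M * P)ᵀ = M * P ∧ (P * M)ᵀ = P * M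

open Polynomial Finset

lemma neg_one_zpow_congr (a b : ℤ) (hab : a % 2 = b % 2) : ((-1:ℝ))^a = (-1)^b := by
  obtain ⟨c, hc⟩ : ∃ c, a = b + 2*c := ⟨(a-b)/2, by omega⟩
  subst hc
  rw [zpow_add₀ (by norm_num : (-1:ℝ) ≠ 0), _root_.zpow_mul]
  norm_num

lemma Zxmat_symm (n : ℕ) (t : ℝ) : (Zxmat n t)ᵀ = Zxmat n t := by
  ext i j
  simp only [Zxmat, transpose_apply, Matrix.of_apply]
  rcases Nat.eq_zero_or_pos (((i:ℕ) + j) % 2) with he | ho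
  · rw [Nat.add_comm (j:ℕ) i]
    rw [if_neg (by omega), if_neg (by omega)]
    congr 1
    exact neg_one_zpow_congr _ _ (by omega)
  · rw [if_pos (by omega), if_pos (by omega)]

lemma quad_form_eq {n : ℕ} (N P : Matrix (Fin n) (Fin n) ℝ) (hsym : Nᵀ = N)
    (hpen : N * P * N = N) (u : Fin n → ℝ) :
    (N.mulVec u) ⬝ᵥ P.mulVec (N.mulVec u) = u ⬝ᵥ N.mulVec u := by
  have h1 : N.mulVec u = u ᵥ* N := by rw [← hsym, Matrix.mulVec_transpose, hsym]
  nth_rewrite 1 [h1]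
  rw [Matrix.dotProduct_mulVec, Matrix.vecMul_vecMul,
    ← Matrix.dotProduct_mulVec, Matrix.mulVec_mulVec, hpen]

lemma sum_mulVec' {n : ℕ} (s : Finset ℕ) (A : ℕ → Matrix (Fin n) (Fin n) ℝ) (v : Fin n → ℝ) :
    (∑ i ∈ s, A i).mulVec v = ∑ i ∈ s, (A i).mulVec v := by
  ext j
  simp only [Matrix.mulVec, dotProduct, Finset.sum_apply, Matrix.sum_apply,
    Finset.sum_mul]
  rw [Finset.sum_comm]

lemma dotProduct_sum' {n : ℕ} (s : Finset ℕ) (v : Fin n → ℝ) (f : ℕ → Fin n → ℝ) :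
    v ⬝ᵥ (∑ i ∈ s, f i) = ∑ i ∈ s, v ⬝ᵥ f i := by
  simp only [dotProduct, Finset.sum_apply, Finset.mul_sum]
  rw [Finset.sum_comm]

/-- The interpolation node set: all points (with `0` removed when `n` is odd). -/
noncomputable def nodes (n p : ℕ) (x : ℕ → ℝ) : Finset ℝ :=
  if n % 2 = 1 then ((Finset.range p).image x).erase 0 else (Finset.range p).image x

/-- The Lagrange interpolation polynomial of `t ↦ -(-1)^{n/2} t^{n/2}` at the nodes. -/
noncomputable def Ppoly (n p : ℕ) (x : ℕ → ℝ) : Polynomial ℝ :=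
  Lagrange.interpolate (nodes n p x) id (fun t => -(-1:ℝ)^(n/2) * t^(n/2))

/-- The common solution `w` of `Z(xᵢ) w = S Z(xᵢ) g`. -/
noncomputable def wvec (n p : ℕ) (x : ℕ → ℝ) : Fin n → ℝ :=
  fun j => if (j:ℕ) % 2 = n % 2 then (-1:ℝ)^((j:ℕ)/2) * (Ppoly n p x).coeff ((j:ℕ)/2) else 0

lemma Ppoly_natDegree_lt {n p : ℕ} (x : ℕ → ℝ) (hpn : 2*p ≤ n+1)
    (hedge : 2*p = n+1 → x 0 = 0) (hn2 : 2 ≤ n) :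
    (Ppoly n p x).natDegree < n/2 := by
  have hcard : (nodes n p x).card ≤ n/2 := by
    have h1 : ((Finset.range p).image x).card ≤ p :=
      le_trans (Finset.card_image_le) (by simp)
    unfold nodes
    by_cases hpar : n % 2 = 1
    · rw [if_pos hpar]
      by_cases hpM : p ≤ n/2
      · exact le_trans (Finset.card_erase_le) (le_trans h1 hpM)
      · have h2p : 2*p = n+1 := by omega
        have hx0 : x 0 = 0 := hedge h2p
        have h0mem : (0:ℝ) ∈ (Finset.range p).image x := by
          rw [← hx0]; exact Finset.mem_image_of_mem x (by simp; omega)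
        rw [Finset.card_erase_of_mem h0mem]
        omega
    · rw [if_neg hpar]
      omega
  by_cases hP : Ppoly n p x = 0
  · rw [hP, natDegree_zero]; omega
  · have hd : (Ppoly n p x).degree < (nodes n p x).card :=
      Lagrange.degree_interpolate_lt _ (Set.injOn_id _)
    have hd2 : (Ppoly n p x).degree < ((n/2 : ℕ) : WithBot ℕ) :=
      lt_of_lt_of_le hd (by exact_mod_cast hcard)
    exact (Polynomial.natDegree_lt_iff_degree_lt hP).mpr hd2

lemma key_mulVec {n p : ℕ} (x : ℕ → ℝ) (hpn : 2*p ≤ n+1) (hedge : 2*p = n+1 → x 0 = 0)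
    (hn : 0 < n) {i : ℕ} (hi : i < p) :
    (Zxmat n (x i)).mulVec (wvec n p x) = (Smat n * Zxmat n (x i)).mulVec (gvec n) := by
  set t := x i with ht
  funext a
  -- simplify RHS
  have hRHS : ((Smat n * Zxmat n t).mulVec (gvec n)) a
      = if hlt : (a:ℕ)+1 < n then Zxmat n t ⟨(a:ℕ)+1, hlt⟩ ⟨n-1, by omega⟩ else 0 := by
    have h1 : ((Smat n * Zxmat n t).mulVec (gvec n)) a
        = (Smat n * Zxmat n t) a ⟨n-1, by omega⟩ := by
      simp only [Matrix.mulVec, dotProduct, gvec]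
      rw [Finset.sum_eq_single (⟨n-1, by omega⟩ : Fin n)]
      · simp
      · intro b _ hb
        have : (b:ℕ) ≠ n-1 := fun hh => hb (Fin.ext hh)
        simp [this]
      · simp
    rw [h1, Matrix.mul_apply]
    by_cases hlt : (a:ℕ)+1 < n
    · rw [dif_pos hlt, Finset.sum_eq_single (⟨(a:ℕ)+1, hlt⟩ : Fin n)]
      · simp [Smat]
      · intro b _ hb
        have : (a:ℕ)+1 ≠ (b:ℕ) := fun hh => hb (Fin.ext hh.symm)
        simp [Smat, this]
      · simp
    · rw [dif_neg hlt]
      apply Finset.sum_eq_zero; intro b _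
      have : (a:ℕ)+1 ≠ (b:ℕ) := by omega
      simp [Smat, this]
  -- LHS as a sum over range n
  set f : ℕ → ℝ := fun j =>
    (if ((a:ℕ) + j) % 2 = 1 then 0
      else (-1 : ℝ) ^ ((((a:ℕ):ℤ) - ((j:ℕ):ℤ)) / 2) * t ^ (((a:ℕ) + j) / 2)) *
    (if j % 2 = n % 2 then (-1:ℝ)^(j/2) * (Ppoly n p x).coeff (j/2) else 0) with hfdef
  have hLHS : ((Zxmat n t).mulVec (wvec n p x)) a = ∑ j ∈ Finset.range n, f j := by
    rw [← Fin.sum_univ_eq_sum_range f n]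
    rfl
  rw [hLHS, hRHS]
  by_cases hpar : (a:ℕ) % 2 = n % 2
  · -- main case
    have han : (a:ℕ) < n := a.isLt
    have hn2 : 2 ≤ n := by omega
    have hlt : (a:ℕ)+1 < n := by omega
    obtain ⟨r, har⟩ : ∃ r, (a:ℕ) = 2*r + n % 2 := ⟨(a:ℕ)/2, by omega⟩
    -- LHS = (-1)^r * t^(r + n%2) * eval t P
    have step1 : ∑ j ∈ Finset.range n, f j
        = ∑ j ∈ (Finset.range n).filter (fun j => j % 2 = n % 2), f j := by
      symm
      apply Finset.sum_filter_of_ne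
      intro j _ hfj
      by_contra hj2
      apply hfj
      rw [hfdef]
      simp only [if_neg hj2, mul_zero]
    have himg : (Finset.range n).filter (fun j => j % 2 = n % 2)
        = (Finset.range (n/2)).image (fun s => 2*s + n % 2) := by
      ext j
      simp only [Finset.mem_filter, Finset.mem_range, Finset.mem_image]
      constructor
      · rintro ⟨h1, h2⟩; exact ⟨j/2, by omega, by omega⟩
      · rintro ⟨s, hs, rfl⟩; omega
    have step2 : ∑ j ∈ (Finset.range n).filter (fun j => j % 2 = n % 2), f j
        = ∑ s ∈ Finset.range (n/2), f (2*s + n % 2) := by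
      rw [himg, Finset.sum_image (by intro s _ s' _ hss; simp only at hss; omega)]
    have step3 : ∀ s ∈ Finset.range (n/2), f (2*s + n % 2)
        = (-1:ℝ)^r * t^(r + n % 2) * ((Ppoly n p x).coeff s * t^s) := by
      intro s _
      simp only [hfdef]
      rw [if_neg (by omega), if_pos (by omega)]
      have e1 : (2*s + n % 2)/2 = s := by omega
      have e2 : ((a:ℕ) + (2*s + n % 2))/2 = r + s + n % 2 := by omega
      have e3 : (((a:ℕ):ℤ) - ((2*s + n % 2 : ℕ):ℤ)) / 2 = (r:ℤ) - s := by push_cast; omega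
      rw [e1, e2, e3, neg_one_zpow_congr ((r:ℤ) - s) (((r+s : ℕ) : ℤ)) (by push_cast; omega),
        zpow_natCast]
      have hss : ((-1:ℝ))^(r+s) * (-1)^s = (-1)^r := by
        rw [pow_add, mul_assoc, ← mul_pow]; norm_num
      calc ((-1:ℝ))^(r+s) * t ^ (r + s + n % 2) * ((-1)^s * (Ppoly n p x).coeff s)
          = ((-1:ℝ))^(r+s) * (-1)^s * (t ^ (r + n % 2) * t^s * (Ppoly n p x).coeff s) := by
            rw [show r + s + n % 2 = (r + n % 2) + s by omega, pow_add]; ring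
        _ = (-1:ℝ)^r * t^(r + n % 2) * ((Ppoly n p x).coeff s * t^s) := by rw [hss]; ring
    have hdeg : (Ppoly n p x).natDegree < n/2 := Ppoly_natDegree_lt x hpn hedge hn2
    have step4 : ∑ j ∈ Finset.range n, f j
        = (-1:ℝ)^r * t^(r + n % 2) * (Ppoly n p x).eval t := by
      rw [step1, step2, Finset.sum_congr rfl step3, ← Finset.mul_sum,
        ← Polynomial.eval_eq_sum_range' hdeg t]
    rw [step4, dif_pos hlt]
    -- RHS entry
    have hcond : ((a:ℕ)+1 + (n-1)) % 2 ≠ 1 := by omega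
    have hZentry : Zxmat n t ⟨(a:ℕ)+1, hlt⟩ ⟨n-1, by omega⟩
        = (-1:ℝ)^(((((a:ℕ)+1 : ℕ):ℤ) - ((n-1 : ℕ):ℤ)) / 2) * t ^ (((a:ℕ)+1 + (n-1)) / 2) := by
      show (if ((a:ℕ)+1 + (n-1)) % 2 = 1 then (0:ℝ) else _) = _
      rw [if_neg hcond]
    rw [hZentry]
    have e4 : ((((a:ℕ)+1 : ℕ):ℤ) - ((n-1 : ℕ):ℤ)) / 2 = (r:ℤ) + 1 - (n/2 : ℕ) := by
      push_cast [Nat.cast_sub (by omega : 1 ≤ n)]; omega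
    have e5 : ((a:ℕ)+1 + (n-1)) / 2 = r + n/2 + n % 2 := by omega
    rw [e4, e5, neg_one_zpow_congr ((r:ℤ) + 1 - (n/2 : ℕ)) (((r + 1 + n/2 : ℕ)):ℤ)
      (by push_cast; omega), zpow_natCast]
    -- now two cases: node or (t = 0 and n odd)
    by_cases hnode : t ∈ nodes n p x
    · have heval : (Ppoly n p x).eval t = -(-1:ℝ)^(n/2) * t^(n/2) := by
        have := Lagrange.eval_interpolate_at_node
          (r := fun u => -(-1:ℝ)^(n/2) * u^(n/2)) (v := id) (Set.injOn_id _) hnode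
        simpa [Ppoly] using this
      rw [heval]
      rw [pow_add, pow_add, pow_add, pow_add]
      ring
    · have hmem : t ∈ (Finset.range p).image x :=
        Finset.mem_image_of_mem x (Finset.mem_range.mpr hi)
      have hodd : n % 2 = 1 ∧ t = 0 := by
        unfold nodes at hnode
        by_cases hh : n % 2 = 1
        · rw [if_pos hh] at hnode
          refine ⟨hh, ?_⟩
          by_contra ht0
          exact hnode (Finset.mem_erase.mpr ⟨ht0, hmem⟩)
        · rw [if_neg hh] at hnode; exact absurd hmem hnode
      rw [hodd.2, hodd.1]
      rw [zero_pow (by omega : r + 1 ≠ 0), zero_pow (by omega : r + n/2 + 1 ≠ 0)]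
      ring
  · -- parity mismatch: both sides zero
    have hsum : ∑ j ∈ Finset.range n, f j = 0 := by
      apply Finset.sum_eq_zero
      intro j _
      simp only [hfdef]
      by_cases hj2 : j % 2 = n % 2
      · rw [if_pos (show ((a:ℕ) + j) % 2 = 1 by omega), zero_mul]
      · rw [if_neg hj2, mul_zero]
    rw [hsum]
    symm
    by_cases hlt : (a:ℕ)+1 < n
    · rw [dif_pos hlt]
      show (if ((a:ℕ)+1 + (n-1)) % 2 = 1 then (0:ℝ) else _) = 0
      rw [if_pos (by omega)]
    · rw [dif_neg hlt]

/-- **Additivity of `F` on moment decompositions.** For `Z = Σ μᵢ Z(xᵢ)`,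
`ξ = S·Z·g + Z·h` and `ξᵢ = S·Z(xᵢ)·g + Z(xᵢ)·h`, both the numerator `⟨ξ, Z⁺ξ⟩` and
denominator `⟨h−k, ξ⟩` of `F(Z)` split as sums over the components; hence so does `F(Z)`. -/
theorem F_additive_on_moment_decomposition {n : ℕ} (hn : 0 < n) (h k : Fin n → ℝ)
    (p : ℕ) (hp : 1 ≤ p) (x μ : ℕ → ℝ)
    (hx0 : 0 ≤ x 0) (hxmono : ∀ i j : ℕ, i < j → j < p → x i < x j)
    (hpn : 2 * p ≤ n + 1) (hedge : 2 * p = n + 1 → x 0 = 0)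
    (hμ : ∀ i < p, 0 < μ i)
    (Z : Matrix (Fin n) (Fin n) ℝ) (hZdef : Z = ∑ i ∈ Finset.range p, μ i • Zxmat n (x i))
    (ξ : Fin n → ℝ) (hξ : ξ = (Smat n * Z).mulVec (gvec n) + Z.mulVec h)
    (ξi : ℕ → Fin n → ℝ)
    (hξi : ∀ i, ξi i = (Smat n * Zxmat n (x i)).mulVec (gvec n) + (Zxmat n (x i)).mulVec h)
    (Zp : Matrix (Fin n) (Fin n) ℝ) (hZp : IsMoorePenroseInv Z Zp)
    (Zpi : ℕ → Matrix (Fin n) (Fin n) ℝ)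
    (hZpi : ∀ i < p, IsMoorePenroseInv (Zxmat n (x i)) (Zpi i)) :
    ξ ⬝ᵥ Zp.mulVec ξ = ∑ i ∈ Finset.range p, μ i * (ξi i ⬝ᵥ (Zpi i).mulVec (ξi i)) ∧
    (h - k) ⬝ᵥ ξ = ∑ i ∈ Finset.range p, μ i * ((h - k) ⬝ᵥ ξi i) ∧
    ((h - k) ⬝ᵥ ξ ≠ 0 →
      (ξ ⬝ᵥ Zp.mulVec ξ) / ((h - k) ⬝ᵥ ξ) =
        (∑ i ∈ Finset.range p, μ i * (ξi i ⬝ᵥ (Zpi i).mulVec (ξi i))) /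
          (∑ i ∈ Finset.range p, μ i * ((h - k) ⬝ᵥ ξi i))) := by
  obtain ⟨hZ1, -, -, -⟩ := hZp
  have hZsym : Zᵀ = Z := by
    rw [hZdef, Matrix.transpose_sum]
    exact Finset.sum_congr rfl fun j _ => by rw [Matrix.transpose_smul, Zxmat_symm]
  set w := wvec n p x with hwdef
  have hw : ∀ i < p, (Zxmat n (x i)).mulVec w = (Smat n * Zxmat n (x i)).mulVec (gvec n) :=
    fun i hi => key_mulVec x hpn hedge hn hi
  have hξi' : ∀ i < p, ξi i = (Zxmat n (x i)).mulVec (w + h) := by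
    intro i hi
    rw [hξi i, Matrix.mulVec_add, hw i hi]
  have hξ' : ξ = Z.mulVec (w + h) := by
    rw [hξ, Matrix.mulVec_add]
    congr 1
    rw [hZdef, sum_mulVec', Matrix.mul_sum, sum_mulVec']
    refine Finset.sum_congr rfl fun i hi => ?_
    rw [Matrix.smul_mulVec, Matrix.mul_smul, Matrix.smul_mulVec,
      hw i (Finset.mem_range.mp hi)]
  have hnum : ξ ⬝ᵥ Zp.mulVec ξ
      = ∑ i ∈ Finset.range p, μ i * (ξi i ⬝ᵥ (Zpi i).mulVec (ξi i)) := by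
    rw [hξ', quad_form_eq Z Zp hZsym hZ1]
    rw [hZdef, sum_mulVec', dotProduct_sum']
    refine Finset.sum_congr rfl fun i hi => ?_
    rw [Matrix.smul_mulVec, dotProduct_smul, hξi' i (Finset.mem_range.mp hi),
      quad_form_eq _ _ (Zxmat_symm n (x i)) (hZpi i (Finset.mem_range.mp hi)).1]
    rfl
  have hden : (h - k) ⬝ᵥ ξ = ∑ i ∈ Finset.range p, μ i * ((h - k) ⬝ᵥ ξi i) := by
    rw [hξ', hZdef, sum_mulVec', dotProduct_sum']
    refine Finset.sum_congr rfl fun i hi => ?_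
    rw [Matrix.smul_mulVec, dotProduct_smul, hξi' i (Finset.mem_range.mp hi)]
    rfl
  exact ⟨hnum, hden, fun _ => by rw [hnum, hden]⟩
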